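/- For A > 0, σ > 0, μ ∈ ℝ, θ > 0, the function F(θ) = ½·Erfc((A - θμ)/(σ√(2θ))) + ½·exp(2μA/σ²)·Erfc((A + θμ)/(σ√(2θ))) is differentiable in θ with ∂_θ F(θ) = (A/(σ√(2π θ³)))·exp(-η²), where η = (A - θμ)/(σ√(2θ)). In particular ∂_θ F(θ) > 0. -/

import Mathlib

/-- The complementary error function `Erfc z = (2/√π) ∫_z^∞ exp (-w²) dw`. -/
noncomputable def Erfc (z : ℝ) : ℝ :=
  (2 / Real.sqrt Real.pi) * ∫ w in Set.Ioi z, Real.exp (-(w ^ 2))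

open Real MeasureTheory intervalIntegral Set

lemma gauss_integrable : MeasureTheory.Integrable (fun w : ℝ => Real.exp (-(w ^ 2))) := by
  have := integrable_exp_neg_mul_sq (b := 1) one_pos
  simpa using this

lemma hasDerivAt_Erfc (z : ℝ) :
    HasDerivAt Erfc (-(2 / Real.sqrt Real.pi * Real.exp (-(z ^ 2)))) z := by
  have hint := gauss_integrable
  have hcont : Continuous fun w : ℝ => Real.exp (-(w ^ 2)) := by continuity
  have hrepr : ∀ u : ℝ, Erfc u =
      (2 / Real.sqrt Real.pi) * (∫ w in Set.Ioi (0:ℝ), Real.exp (-(w ^ 2)))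
        - (2 / Real.sqrt Real.pi) * ∫ w in (0:ℝ)..u, Real.exp (-(w ^ 2)) := by
    intro u
    have h1 : (∫ w in (0:ℝ)..u, Real.exp (-(w ^ 2)))
        = (∫ w in Set.Iic u, Real.exp (-(w ^ 2))) - ∫ w in Set.Iic (0:ℝ), Real.exp (-(w ^ 2)) :=
      (integral_Iic_sub_Iic hint.integrableOn hint.integrableOn).symm
    have h2 : (∫ w in Set.Iic u, Real.exp (-(w ^ 2))) + (∫ w in Set.Ioi u, Real.exp (-(w ^ 2)))
        = ∫ w, Real.exp (-(w ^ 2)) :=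
      intervalIntegral.integral_Iic_add_Ioi hint.integrableOn hint.integrableOn
    have h3 : (∫ w in Set.Iic (0:ℝ), Real.exp (-(w ^ 2))) + (∫ w in Set.Ioi (0:ℝ), Real.exp (-(w ^ 2)))
        = ∫ w, Real.exp (-(w ^ 2)) :=
      intervalIntegral.integral_Iic_add_Ioi hint.integrableOn hint.integrableOn
    have h4 : (∫ w in Set.Ioi u, Real.exp (-(w ^ 2)))
        = (∫ w in Set.Ioi (0:ℝ), Real.exp (-(w ^ 2)))
          - ((∫ w in Set.Iic u, Real.exp (-(w ^ 2))) - ∫ w in Set.Iic (0:ℝ), Real.exp (-(w ^ 2))) := by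
      linarith
    unfold Erfc
    rw [h1, h4]; ring
  have hd : HasDerivAt (fun u => (2 / Real.sqrt Real.pi) * (∫ w in Set.Ioi (0:ℝ), Real.exp (-(w ^ 2)))
        - (2 / Real.sqrt Real.pi) * ∫ w in (0:ℝ)..u, Real.exp (-(w ^ 2)))
      (-(2 / Real.sqrt Real.pi * Real.exp (-(z ^ 2)))) z := by
    have h := (intervalIntegral.integral_hasDerivAt_right
      (hint.intervalIntegrable) (hcont.stronglyMeasurableAtFilter _ _) hcont.continuousAt
      : HasDerivAt (fun u => ∫ w in (0:ℝ)..u, Real.exp (-(w ^ 2))) (Real.exp (-(z ^ 2))) z)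
    exact ((hasDerivAt_const z _).sub (h.const_mul (2 / Real.sqrt Real.pi))).congr_deriv (by ring)
  exact hd.congr_of_eventuallyEq (Filter.Eventually.of_forall hrepr)

/-- The derivative computation underlying Theorem 5.4 (case `A > 0`): the
running-maximum tail probability (A.7b) is differentiable in the horizon `θ`,
with positive derivative `(A/(σ √(2π θ³))) exp (-η²)`, `η = (A - θμ)/(σ√(2θ))`. -/
theorem runningMax_tail_deriv_pos
    (A σ μ : ℝ) (hA : 0 < A) (hσ : 0 < σ) (θ : ℝ) (hθ : 0 < θ)
    (F : ℝ → ℝ)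
    (hF : ∀ t > (0:ℝ), F t =
      1 / 2 * Erfc ((A - t * μ) / (σ * Real.sqrt (2 * t)))
        + 1 / 2 * Real.exp (2 * μ * A / σ ^ 2)
            * Erfc ((A + t * μ) / (σ * Real.sqrt (2 * t)))) :
    HasDerivAt F
      (A / (σ * Real.sqrt (2 * Real.pi * θ ^ 3))
        * Real.exp (-((A - θ * μ) / (σ * Real.sqrt (2 * θ))) ^ 2)) θ ∧
    0 < A / (σ * Real.sqrt (2 * Real.pi * θ ^ 3))
        * Real.exp (-((A - θ * μ) / (σ * Real.sqrt (2 * θ))) ^ 2) := by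
  set s := Real.sqrt (2 * θ) with hs_def
  have hs0 : 0 < s := Real.sqrt_pos.mpr (by linarith)
  have hs2 : s ^ 2 = 2 * θ := Real.sq_sqrt (by linarith)
  have hπ : 0 < Real.sqrt Real.pi := Real.sqrt_pos.mpr Real.pi_pos
  -- derivative of the denominator t ↦ σ * √(2t)
  have hden : HasDerivAt (fun t : ℝ => σ * Real.sqrt (2 * t)) (σ * (1 / (2 * s) * 2)) θ := by
    have h1 : HasDerivAt (fun t : ℝ => 2 * t) 2 θ := by
      simpa using (hasDerivAt_id θ).const_mul 2
    have h2 := (Real.hasDerivAt_sqrt (by positivity : (2 * θ : ℝ) ≠ 0)).comp θ h1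
    exact h2.const_mul σ
  have hdenθ : σ * Real.sqrt (2 * θ) ≠ 0 := by positivity
  -- derivative of g₁
  have hg1 : HasDerivAt (fun t : ℝ => (A - t * μ) / (σ * Real.sqrt (2 * t)))
      (((-μ) * (σ * s) - (A - θ * μ) * (σ * (1 / (2 * s) * 2))) / (σ * s) ^ 2) θ := by
    have hn : HasDerivAt (fun t : ℝ => A - t * μ) (-μ) θ := by
      exact ((hasDerivAt_const θ A).sub ((hasDerivAt_id θ).mul_const μ)).congr_deriv (by ring)
    exact hn.div hden hdenθ
  have hg2 : HasDerivAt (fun t : ℝ => (A + t * μ) / (σ * Real.sqrt (2 * t)))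
      ((μ * (σ * s) - (A + θ * μ) * (σ * (1 / (2 * s) * 2))) / (σ * s) ^ 2) θ := by
    have hn : HasDerivAt (fun t : ℝ => A + t * μ) μ θ := by
      exact ((hasDerivAt_const θ A).add ((hasDerivAt_id θ).mul_const μ)).congr_deriv (by ring)
    exact hn.div hden hdenθ
  have hE1 := (hasDerivAt_Erfc ((A - θ * μ) / (σ * s))).comp θ hg1
  have hE2 := (hasDerivAt_Erfc ((A + θ * μ) / (σ * s))).comp θ hg2
  have hG : HasDerivAt (fun t => 1 / 2 * Erfc ((A - t * μ) / (σ * Real.sqrt (2 * t)))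
        + 1 / 2 * Real.exp (2 * μ * A / σ ^ 2)
            * Erfc ((A + t * μ) / (σ * Real.sqrt (2 * t))))
      (1 / 2 * (-(2 / Real.sqrt Real.pi * Real.exp (-((A - θ * μ) / (σ * s)) ^ 2)) *
          (((-μ) * (σ * s) - (A - θ * μ) * (σ * (1 / (2 * s) * 2))) / (σ * s) ^ 2))
        + 1 / 2 * Real.exp (2 * μ * A / σ ^ 2) *
          (-(2 / Real.sqrt Real.pi * Real.exp (-((A + θ * μ) / (σ * s)) ^ 2)) *
          ((μ * (σ * s) - (A + θ * μ) * (σ * (1 / (2 * s) * 2))) / (σ * s) ^ 2))) θ :=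
    (hE1.const_mul (1 / 2)).add (hE2.const_mul (1 / 2 * Real.exp (2 * μ * A / σ ^ 2)))
  -- the exponential identity
  have hexp : Real.exp (2 * μ * A / σ ^ 2) * Real.exp (-((A + θ * μ) / (σ * s)) ^ 2)
      = Real.exp (-((A - θ * μ) / (σ * s)) ^ 2) := by
    rw [← Real.exp_add]
    congr 1
    field_simp
    linear_combination (2 * μ * A) * hs2
  -- the sqrt identity
  have hsqrt3 : Real.sqrt (2 * Real.pi * θ ^ 3) = Real.sqrt Real.pi * s * θ := by
    have h : 2 * Real.pi * θ ^ 3 = Real.pi * (2 * θ) * θ ^ 2 := by ring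
    rw [h, Real.sqrt_mul (by positivity), Real.sqrt_mul Real.pi_pos.le,
      Real.sqrt_sq hθ.le]
  -- identify the derivative value
  have hval : A / (σ * Real.sqrt (2 * Real.pi * θ ^ 3))
        * Real.exp (-((A - θ * μ) / (σ * Real.sqrt (2 * θ))) ^ 2)
      = 1 / 2 * (-(2 / Real.sqrt Real.pi * Real.exp (-((A - θ * μ) / (σ * s)) ^ 2)) *
          (((-μ) * (σ * s) - (A - θ * μ) * (σ * (1 / (2 * s) * 2))) / (σ * s) ^ 2))
        + 1 / 2 * Real.exp (2 * μ * A / σ ^ 2) *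
          (-(2 / Real.sqrt Real.pi * Real.exp (-((A + θ * μ) / (σ * s)) ^ 2)) *
          ((μ * (σ * s) - (A + θ * μ) * (σ * (1 / (2 * s) * 2))) / (σ * s) ^ 2)) := by
    have h2' : Real.exp (-((A + θ * μ) / (σ * s)) ^ 2)
        = Real.exp (-((A - θ * μ) / (σ * s)) ^ 2) / Real.exp (2 * μ * A / σ ^ 2) := by
      rw [eq_div_iff (Real.exp_ne_zero _), mul_comm]; exact hexp
    rw [hsqrt3, ← hs_def, h2']
    set E := Real.exp (-((A - θ * μ) / (σ * s)) ^ 2) with hE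
    set C := Real.exp (2 * μ * A / σ ^ 2) with hC
    have hEne : E ≠ 0 := Real.exp_ne_zero _
    have hCne : C ≠ 0 := Real.exp_ne_zero _
    field_simp
    linear_combination A * hs2
  constructor
  · rw [hval]
    refine hG.congr_of_eventuallyEq ?_
    filter_upwards [eventually_gt_nhds hθ] with t ht using hF t ht
  · rw [hval, ← hval]
    have : 0 < Real.sqrt (2 * Real.pi * θ ^ 3) := by
      rw [hsqrt3]; positivity
    positivity
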